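/- The symmetric 6×6 matrix P₄ with diagonal entries 2, with P₄(i,7−i)=0 for all i, and all other entries 1, is completely positive semidefinite with cpsd factors of size 4: with the six 4×2 matrices aⁱ listed as a¹=[e₁ e₂], a²=[e₁ e₃], a³=[e₁ e₄], a⁴=[e₃ e₂], a⁵=[e₂ e₄], a⁶=[e₃ e₄] (columns being standard basis vectors of ℝ⁴), setting Aⁱ = aⁱ(aⁱ)ᵀ, one has P₄(i,j) = trace(AⁱAʲ) for all i,j ∈ {1,...,6}. -/

import Mathlib

open Matrix

set_option maxHeartbeats 2000000 in
theorem P4_completely_psd_factorization :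
    let P₄ : Matrix (Fin 6) (Fin 6) ℝ :=
      !![2,1,1,1,1,0; 1,2,1,1,0,1; 1,1,2,0,1,1; 1,1,0,2,1,1; 1,0,1,1,2,1; 0,1,1,1,1,2]
    let a : Fin 6 → Matrix (Fin 4) (Fin 2) ℝ :=
      ![!![1,0; 0,1; 0,0; 0,0],
        !![1,0; 0,0; 0,1; 0,0],
        !![1,0; 0,0; 0,0; 0,1],
        !![0,0; 0,1; 1,0; 0,0],
        !![0,0; 1,0; 0,0; 0,1],
        !![0,0; 0,0; 1,0; 0,1]]
    let A : Fin 6 → Matrix (Fin 4) (Fin 4) ℝ := fun i => a i * (a i)ᵀ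
    (∀ i, (A i).PosSemidef) ∧ (∀ i j, P₄ i j = ((A i) * (A j)).trace) := by
  intro P₄ a A
  constructor
  · intro i
    show (a i * (a i)ᵀ).PosSemidef
    rw [show (a i)ᵀ = (a i)ᴴ from (Matrix.conjTranspose_eq_transpose_of_trivial _).symm]
    exact Matrix.posSemidef_self_mul_conjTranspose (a i)
  · intro i j
    fin_cases i <;> fin_cases j <;>
      simp [A, a, P₄, Matrix.trace, Matrix.diag, Matrix.mul_apply, Fin.sum_univ_succ,
        show (5:Fin 6) = Fin.succ 4 from rfl, Matrix.cons_val_succ,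
        show (3:Fin 4) = Fin.succ 2 from rfl, Matrix.vecHead, Matrix.vecTail,
        Matrix.transpose_apply, Function.comp, Matrix.vecMul, dotProduct] <;> norm_num
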